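/- For every α ≥ 0 and γ ≥ 0 there exists a positive constant C̃(α, γ) such that the following holds. Suppose the margin condition with parameters α, γ holds and 𝒵*(X) is a singleton almost surely. Then for every measurable policy π : ℝ^p → 𝒵∠, P(π(X) ≠ π_{f₀}(X)) ≤ C̃(α, γ) · (Reg(π)/B)^(α/(1+α)). -/

import Mathlib

open MeasureTheory Matrix

/-- The set of optimal decisions `𝒵*(x) = argmin_{z ∈ 𝒵} f₀(x)ᵀ z`, where `𝒵` is the
convex hull of the vertex set `ZA`. -/
def Zstar {p d : ℕ} (ZA : Finset (Fin d → ℝ))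
    (f₀ : (Fin p → ℝ) → Fin d → ℝ) (x : Fin p → ℝ) : Set (Fin d → ℝ) :=
  {w | w ∈ convexHull ℝ (ZA : Set (Fin d → ℝ)) ∧
    ∀ w' ∈ convexHull ℝ (ZA : Set (Fin d → ℝ)), f₀ x ⬝ᵥ w ≤ f₀ x ⬝ᵥ w'}

open Classical in
/-- The sub-optimality gap `Δ(x)`: if `𝒵*(x) ≠ 𝒵`, the difference between the smallest
value of `f₀(x)ᵀ z` over suboptimal vertices `z ∈ 𝒵∠ \ 𝒵*(x)` and the optimal value
`inf_{z ∈ 𝒵} f₀(x)ᵀ z`; otherwise `0`. -/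
noncomputable def Delta {p d : ℕ} (ZA : Finset (Fin d → ℝ))
    (f₀ : (Fin p → ℝ) → Fin d → ℝ) (x : Fin p → ℝ) : ℝ :=
  if Zstar ZA f₀ x ≠ convexHull ℝ (ZA : Set (Fin d → ℝ)) then
    sInf ((fun w => f₀ x ⬝ᵥ w) '' ((ZA : Set (Fin d → ℝ)) \ Zstar ZA f₀ x)) -
      sInf ((fun w => f₀ x ⬝ᵥ w) '' convexHull ℝ (ZA : Set (Fin d → ℝ)))
  else 0

lemma key_pointwise {p d : ℕ} (ZA : Finset (Fin d → ℝ)) (f₀ : (Fin p → ℝ) → Fin d → ℝ)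
    (x : Fin p → ℝ) (zs : Fin d → ℝ) (hzs : Zstar ZA f₀ x = {zs})
    (z : Fin d → ℝ) (hz : z ∈ ZA) :
    0 ≤ f₀ x ⬝ᵥ (z - zs) ∧
      (z ≠ zs → 0 < Delta ZA f₀ x ∧ Delta ZA f₀ x ≤ f₀ x ⬝ᵥ (z - zs)) := by
  have hzsm : zs ∈ Zstar ZA f₀ x := by rw [hzs]; rfl
  obtain ⟨hzs_hull, hzs_opt⟩ := hzsm
  have hz_hull : z ∈ convexHull ℝ (ZA : Set (Fin d → ℝ)) :=
    subset_convexHull ℝ _ (by exact_mod_cast hz)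
  have h0 : 0 ≤ f₀ x ⬝ᵥ (z - zs) := by
    rw [dotProduct_sub]; linarith [hzs_opt z hz_hull]
  refine ⟨h0, fun hne => ?_⟩
  have hzmem : z ∈ (ZA : Set (Fin d → ℝ)) \ Zstar ZA f₀ x := by
    refine ⟨by exact_mod_cast hz, ?_⟩
    rw [hzs]; simpa using hne
  have hZne : Zstar ZA f₀ x ≠ convexHull ℝ (ZA : Set (Fin d → ℝ)) := by
    intro h
    exact hzmem.2 (h ▸ hz_hull)
  have hD : Delta ZA f₀ x =
      sInf ((fun w => f₀ x ⬝ᵥ w) '' ((ZA : Set (Fin d → ℝ)) \ Zstar ZA f₀ x)) -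
        sInf ((fun w => f₀ x ⬝ᵥ w) '' convexHull ℝ (ZA : Set (Fin d → ℝ))) := by
    rw [Delta, if_pos hZne]
  have hInf2 : sInf ((fun w => f₀ x ⬝ᵥ w) '' convexHull ℝ (ZA : Set (Fin d → ℝ)))
      = f₀ x ⬝ᵥ zs := by
    apply IsLeast.csInf_eq
    constructor
    · exact ⟨zs, hzs_hull, rfl⟩
    · rintro y ⟨w, hw, rfl⟩
      exact hzs_opt w hw
  set S : Set ℝ := (fun w => f₀ x ⬝ᵥ w) '' ((ZA : Set (Fin d → ℝ)) \ Zstar ZA f₀ x) with hS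
  have hSfin : S.Finite := (ZA.finite_toSet.diff).image _
  have hSne : S.Nonempty := ⟨_, z, hzmem, rfl⟩
  have hInfS_mem : sInf S ∈ S := hSne.csInf_mem hSfin
  obtain ⟨w, hw, hweq⟩ := hInfS_mem
  have hw_hull : w ∈ convexHull ℝ (ZA : Set (Fin d → ℝ)) := subset_convexHull ℝ _ hw.1
  have hlt : f₀ x ⬝ᵥ zs < f₀ x ⬝ᵥ w := by
    rcases lt_or_eq_of_le (hzs_opt w hw_hull) with h | h
    · exact h
    · exact absurd ⟨hw_hull, fun w' hw' => h ▸ hzs_opt w' hw'⟩ hw.2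
  have hle : sInf S ≤ f₀ x ⬝ᵥ z := csInf_le hSfin.bddBelow ⟨z, hzmem, rfl⟩
  constructor
  · rw [hD, hInf2, ← hweq]; linarith
  · rw [hD, hInf2, dotProduct_sub]; linarith

lemma abs_dot_le {d : ℕ} (a b : Fin d → ℝ) : |a ⬝ᵥ b| ≤ d * (‖a‖ * ‖b‖) := by
  calc |a ⬝ᵥ b| ≤ ∑ i, |a i * b i| := Finset.abs_sum_le_sum_abs _ _
  _ ≤ ∑ _i : Fin d, ‖a‖ * ‖b‖ := by
      apply Finset.sum_le_sum
      intro i _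
      rw [abs_mul]
      exact mul_le_mul (by simpa using norm_le_pi_norm a i)
        (by simpa using norm_le_pi_norm b i) (abs_nonneg _) (norm_nonneg _)
  _ = d * (‖a‖ * ‖b‖) := by simp [mul_comm]

/-- Lemma C.3: for every `α ≥ 0` and `γ ≥ 0` there is a constant `C̃(α, γ) > 0` such that,
whenever the margin condition with parameters `α, γ` holds and `𝒵*(X)` is a.s. the
singleton `{π_{f₀}(X)}`, every measurable policy `π` taking values in the vertex set
satisfies `P(π(X) ≠ π_{f₀}(X)) ≤ C̃(α, γ) · (Reg(π) / B) ^ (α / (1 + α))`. -/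
theorem stmt16 (α γ : ℝ) (hα : 0 ≤ α) (hγ : 0 ≤ γ) :
    ∃ Ctil : ℝ, 0 < Ctil ∧
      ∀ (p d : ℕ) (ZA : Finset (Fin d → ℝ)) (B : ℝ), 0 < B → ZA.Nonempty →
      (∀ w ∈ ZA, ‖w‖ ≤ B) →
      ∀ (Ω : Type) (_ : MeasurableSpace Ω) (μ : Measure Ω), IsProbabilityMeasure μ →
      ∀ X : Ω → Fin p → ℝ, Measurable X →
      ∀ f₀ : (Fin p → ℝ) → Fin d → ℝ, Measurable f₀ → (∀ x, ‖f₀ x‖ ≤ 1) →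
      (∀ δ : ℝ, 0 < δ →
        μ {ω | 0 < Delta ZA f₀ (X ω) ∧ Delta ZA f₀ (X ω) ≤ δ} ≤
          ENNReal.ofReal ((γ * δ / B) ^ α)) →
      ∀ πstar : (Fin p → ℝ) → Fin d → ℝ, Measurable πstar →
      (∀ᵐ ω ∂μ, Zstar ZA f₀ (X ω) = {πstar (X ω)}) →
      ∀ π : (Fin p → ℝ) → Fin d → ℝ, Measurable π → (∀ x, π x ∈ ZA) →
      (μ {ω | π (X ω) ≠ πstar (X ω)}).toReal ≤
        Ctil * ((∫ ω, f₀ (X ω) ⬝ᵥ (π (X ω) - πstar (X ω)) ∂μ) / B) ^ (α / (1 + α)) := by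
  have hCpos : 0 < γ ^ α + 1 := by linarith [Real.rpow_nonneg hγ α]
  refine ⟨γ ^ α + 1, hCpos, ?_⟩
  intro p d ZA B hB hZA hBnorm Ω mΩ μ hμ X hX f₀ hf₀ hf₀norm hmargin πstar hπstar hae π hπ hπZA
  set g : Ω → ℝ := fun ω => f₀ (X ω) ⬝ᵥ (π (X ω) - πstar (X ω)) with hgdef
  have hg_meas : Measurable g := by
    have hge : g = fun ω => ∑ i, f₀ (X ω) i * (π (X ω) i - πstar (X ω) i) := by
      funext ω; simp [hgdef, dotProduct]
    rw [hge]
    exact Finset.measurable_sum _ fun i _ =>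
      ((measurable_pi_apply i).comp (hf₀.comp hX)).mul
        (((measurable_pi_apply i).comp (hπ.comp hX)).sub
         ((measurable_pi_apply i).comp (hπstar.comp hX)))
  have hhull : convexHull ℝ (ZA : Set (Fin d → ℝ)) ⊆ Metric.closedBall 0 B :=
    convexHull_min (fun w hw => mem_closedBall_zero_iff.2 (hBnorm w (by exact_mod_cast hw)))
      (convex_closedBall 0 B)
  have hae2 : ∀ᵐ ω ∂μ, 0 ≤ g ω ∧ (π (X ω) ≠ πstar (X ω) →
      0 < Delta ZA f₀ (X ω) ∧ Delta ZA f₀ (X ω) ≤ g ω) ∧ ‖πstar (X ω)‖ ≤ B := by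
    filter_upwards [hae] with ω hω
    have hk := key_pointwise ZA f₀ (X ω) _ hω (π (X ω)) (hπZA (X ω))
    have hzs_hull : πstar (X ω) ∈ convexHull ℝ (ZA : Set (Fin d → ℝ)) := by
      have : πstar (X ω) ∈ Zstar ZA f₀ (X ω) := by rw [hω]; rfl
      exact this.1
    exact ⟨hk.1, hk.2, mem_closedBall_zero_iff.1 (hhull hzs_hull)⟩
  have hge_ae : 0 ≤ᵐ[μ] g := by filter_upwards [hae2] with ω hω; exact hω.1
  have hg_int : Integrable g μ := by
    refine ⟨hg_meas.aestronglyMeasurable, ?_⟩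
    apply HasFiniteIntegral.of_bounded (C := (d : ℝ) * (1 * (2 * B)))
    filter_upwards [hae2] with ω hω
    have h1 : ‖π (X ω) - πstar (X ω)‖ ≤ 2 * B := by
      have h2 := norm_sub_le (π (X ω)) (πstar (X ω))
      have h3 := hBnorm _ (hπZA (X ω))
      linarith [hω.2.2]
    calc ‖g ω‖ ≤ (d : ℝ) * (‖f₀ (X ω)‖ * ‖π (X ω) - πstar (X ω)‖) := by
          rw [Real.norm_eq_abs]; exact abs_dot_le _ _
    _ ≤ (d : ℝ) * (1 * (2 * B)) := by
        apply mul_le_mul_of_nonneg_left _ (Nat.cast_nonneg d)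
        exact mul_le_mul (hf₀norm _) h1 (norm_nonneg _) zero_le_one
  have hReg_nonneg : 0 ≤ ∫ ω, g ω ∂μ := integral_nonneg_of_ae hge_ae
  set Reg : ℝ := ∫ ω, g ω ∂μ with hRegdef
  rcases eq_or_lt_of_le hReg_nonneg with h0 | hRegpos
  · -- Reg = 0
    have hg0 : g =ᵐ[μ] 0 := (integral_eq_zero_iff_of_nonneg_ae hge_ae hg_int).1 h0.symm
    have hE0 : μ {ω | π (X ω) ≠ πstar (X ω)} = 0 := by
      apply measure_eq_zero_iff_ae_notMem.2
      filter_upwards [hae2, hg0] with ω h1 h2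
      intro hne
      obtain ⟨hpos, hle⟩ := h1.2.1 hne
      simp only [Pi.zero_apply] at h2
      linarith
    rw [hE0]
    simp only [ENNReal.toReal_zero]
    exact mul_nonneg hCpos.le (Real.rpow_nonneg (div_nonneg hReg_nonneg hB.le) _)
  · -- Reg > 0
    have h1α : (0:ℝ) < 1 + α := by linarith
    set R : ℝ := Reg / B with hRdef
    have hR : 0 < R := div_pos hRegpos hB
    set t : ℝ := R ^ (1 / (1 + α)) with htdef
    have ht : 0 < t := Real.rpow_pos_of_pos hR _
    have htpow : t ^ (1 + α) = R := by
      rw [htdef, ← Real.rpow_mul hR.le, one_div_mul_cancel h1α.ne', Real.rpow_one]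
    set δ : ℝ := B * t with hδdef
    have hδ : 0 < δ := mul_pos hB ht
    have hmar := mul_meas_ge_le_integral_of_nonneg hge_ae hg_int δ
    set A₁ : Set Ω := {ω | 0 < Delta ZA f₀ (X ω) ∧ Delta ZA f₀ (X ω) ≤ δ} with hA₁
    set A₂ : Set Ω := {ω | δ ≤ g ω} with hA₂
    set U : Set Ω := A₁ ∪ A₂ with hU
    have hsub : ({ω | π (X ω) ≠ πstar (X ω)} : Set Ω) ≤ᵐ[μ] U := by
      filter_upwards [hae2] with ω hω hne
      simp only [hU, hA₁, hA₂, Set.mem_union, Set.mem_setOf_eq]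
      obtain ⟨hΔpos, hΔle⟩ := hω.2.1 hne
      by_cases h : Delta ZA f₀ (X ω) ≤ δ
      · exact Or.inl ⟨hΔpos, h⟩
      · exact Or.inr (le_trans (not_le.1 h).le hΔle)
    have hBs : μ A₂ ≤ ENNReal.ofReal (Reg / δ) := by
      have hfin : μ A₂ ≠ ⊤ := measure_ne_top μ _
      rw [ENNReal.le_ofReal_iff_toReal_le hfin (div_nonneg hRegpos.le hδ.le)]
      rw [le_div_iff₀ hδ]
      rw [measureReal_def] at hmar
      linarith
    have hEle : μ {ω | π (X ω) ≠ πstar (X ω)} ≤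
        ENNReal.ofReal ((γ * δ / B) ^ α + Reg / δ) := by
      calc μ {ω | π (X ω) ≠ πstar (X ω)} ≤
          μ U :=
            measure_mono_ae hsub
      _ = μ (A₁ ∪ A₂) := by rw [hU]
      _ ≤ μ A₁ + μ A₂ :=
            measure_union_le _ _
      _ ≤ ENNReal.ofReal ((γ * δ / B) ^ α) + ENNReal.ofReal (Reg / δ) :=
            add_le_add (hmargin δ hδ) hBs
      _ = ENNReal.ofReal ((γ * δ / B) ^ α + Reg / δ) :=
            (ENNReal.ofReal_add (Real.rpow_nonneg (by positivity) _)
              (div_nonneg hRegpos.le hδ.le)).symm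
    have htoReal : (μ {ω | π (X ω) ≠ πstar (X ω)}).toReal ≤ (γ * δ / B) ^ α + Reg / δ := by
      apply ENNReal.toReal_le_of_le_ofReal _ hEle
      have := Real.rpow_nonneg (show (0:ℝ) ≤ γ * δ / B by positivity) α
      have := div_nonneg hRegpos.le hδ.le
      linarith
    -- compute the two terms
    have hterm1 : (γ * δ / B) ^ α = γ ^ α * t ^ α := by
      have : γ * δ / B = γ * t := by rw [hδdef]; field_simp
      rw [this, Real.mul_rpow hγ ht.le]
    have hterm2 : Reg / δ = t ^ α := by
      have h1 : t ^ α = t ^ (1 + α) / t ^ (1:ℝ) := by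
        rw [← Real.rpow_sub ht]; norm_num
      rw [h1, htpow, Real.rpow_one, hδdef, hRdef, div_div]
    have hfinal : t ^ α = R ^ (α / (1 + α)) := by
      rw [htdef, ← Real.rpow_mul hR.le]
      congr 1
      field_simp
    rw [hterm1, hterm2] at htoReal
    calc (μ {ω | π (X ω) ≠ πstar (X ω)}).toReal ≤ γ ^ α * t ^ α + t ^ α := htoReal
    _ = (γ ^ α + 1) * t ^ α := by ring
    _ = (γ ^ α + 1) * (Reg / B) ^ (α / (1 + α)) := by rw [hfinal, hRdef]
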